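/- Let M be a metric space and let X ⊆ M be a closed subset, where X×X ⊆ M×M carries the metric d((x,y),(x',y')) = d(x,x') + d(y,y'). Let E ⊆ X×X be a controlled set (i.e. sup{d(x,y) : (x,y) ∈ E} < ∞), and let f : X×X → ℝ be a bounded, uniformly continuous function with f = 0 outside E. Then there exists a bounded, uniformly continuous function h : M×M → ℝ such that h restricted to X×X equals f and h(z) = 0 for every z ∈ M×M with dist(z, E) ≥ 1; in particular h vanishes outside a controlled subset of M×M. -/

import Mathlib

open Metric Set

private lemma min_lip (c x y : ℝ) : |min c x - min c y| ≤ |x - y| := by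
  rcases le_total c x with h1 | h1 <;> rcases le_total c y with h2 | h2 <;>
    [rw [min_eq_left h1, min_eq_left h2]; rw [min_eq_left h1, min_eq_right h2];
     rw [min_eq_right h1, min_eq_left h2]; rw [min_eq_right h1, min_eq_right h2]] <;>
  · apply abs_le.mpr
    constructor <;> linarith [le_abs_self (x - y), neg_abs_le (x - y), abs_nonneg (x - y)]

private lemma max_lip (c x y : ℝ) : |max c x - max c y| ≤ |x - y| := by
  rcases le_total c x with h1 | h1 <;> rcases le_total c y with h2 | h2 <;>
    [rw [max_eq_right h1, max_eq_right h2]; rw [max_eq_right h1, max_eq_left h2];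
     rw [max_eq_left h1, max_eq_right h2]; rw [max_eq_left h1, max_eq_left h2]] <;>
  · apply abs_le.mpr
    constructor <;> linarith [le_abs_self (x - y), neg_abs_le (x - y), abs_nonneg (x - y)]

private lemma clamp_lip (B x y : ℝ) :
    |max (-B) (min B x) - max (-B) (min B y)| ≤ |x - y| :=
  le_trans (max_lip (-B) (min B x) (min B y)) (min_lip B x y)

theorem uc_extend {α : Type*} [MetricSpace α] {A : Set α} (hA : A.Nonempty)
    (f : A → ℝ) (C : ℝ) (hC : ∀ a, |f a| ≤ C) (hf : UniformContinuous f) :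
    ∃ F : α → ℝ, UniformContinuous F ∧ (∀ z, |F z| ≤ 2 * C) ∧ ∀ a : A, F a = f a := by
  obtain ⟨a0, ha0⟩ := hA
  haveI : Nonempty A := ⟨⟨a0, ha0⟩⟩
  have hC0 : 0 ≤ C := le_trans (abs_nonneg _) (hC ⟨a0, ha0⟩)
  rcases eq_or_lt_of_le hC0 with hC0' | hCpos
  · refine ⟨0, uniformContinuous_const, fun z => by simp; linarith, fun a => ?_⟩
    have h1 := hC a
    rw [← hC0'] at h1
    have h2 := abs_nonneg (f a)
    have : |f a| = 0 := le_antisymm h1 h2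
    simp [abs_eq_zero.mp this]
  -- key approximate extension step
  have step : ∀ (g : A → ℝ) (B : ℝ), ∃ G : α → ℝ,
      UniformContinuous g → 0 < B → (∀ a, |g a| ≤ B) →
      UniformContinuous G ∧ (∀ z, |G z| ≤ B) ∧ ∀ a : A, |g a - G a| ≤ B / 2 := by
    intro g B
    by_cases h : UniformContinuous g ∧ 0 < B ∧ ∀ a, |g a| ≤ B
    swap
    · exact ⟨0, fun h1 h2 h3 => absurd ⟨h1, h2, h3⟩ h⟩
    obtain ⟨hg, hB, hgB⟩ := h
    obtain ⟨δ, hδ, hδ'⟩ := Metric.uniformContinuous_iff.mp hg (B / 2) (by linarith)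
    set L : ℝ := 2 * B / δ with hL
    have hLpos : 0 < L := by positivity
    set F : α → ℝ := fun z => sInf (range fun a : A => g a + L * dist z (a : α)) with hF
    have hne : ∀ z : α, (range fun a : A => g a + L * dist z (a : α)).Nonempty :=
      fun z => range_nonempty _
    have hbdd : ∀ z : α, BddBelow (range fun a : A => g a + L * dist z (a : α)) := by
      intro z
      refine ⟨-B, ?_⟩
      rintro y ⟨a, rfl⟩
      dsimp only
      have h1 : 0 ≤ L * dist z (a : α) := by positivity
      linarith [(abs_le.mp (hgB a)).1]
    have hFle : ∀ z w : α, F z ≤ F w + L * dist z w := by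
      intro z w
      have : F z - L * dist z w ≤ F w := by
        apply le_csInf (hne w)
        rintro y ⟨a, rfl⟩
        dsimp only
        have h1 : F z ≤ g a + L * dist z (a : α) := csInf_le (hbdd z) ⟨a, rfl⟩
        have h2 : dist z (a : α) ≤ dist z w + dist w (a : α) := dist_triangle _ _ _
        nlinarith [hLpos.le]
      linarith
    have hFlip : ∀ z w : α, |F z - F w| ≤ L * dist z w := by
      intro z w
      rw [abs_sub_le_iff]
      constructor
      · linarith [hFle z w]
      · have := hFle w z; rw [dist_comm w z] at this; linarith
    have hFleg : ∀ a : A, F a ≤ g a := by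
      intro a
      have : F a ≤ g a + L * dist (a : α) (a : α) := csInf_le (hbdd _) ⟨a, rfl⟩
      simpa using this
    have hFgeg : ∀ x : A, g x - B / 2 ≤ F x := by
      intro x
      apply le_csInf (hne _)
      rintro y ⟨a, rfl⟩
      dsimp only
      by_cases hd : dist (x : α) (a : α) < δ
      · have : dist (g x) (g a) < B / 2 := hδ' (by rwa [Subtype.dist_eq])
        rw [Real.dist_eq, abs_sub_lt_iff] at this
        have : 0 ≤ L * dist (x : α) (a : α) := by positivity
        linarith [this]
      · push_neg at hd
        have h1 : L * δ ≤ L * dist (x : α) (a : α) := by nlinarith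
        have h2 : L * δ = 2 * B := by rw [hL]; field_simp
        have := (abs_le.mp (hgB x)).2
        have := (abs_le.mp (hgB a)).1
        linarith
    refine ⟨fun z => max (-B) (min B (F z)), fun _ _ _ => ?_⟩
    refine ⟨?_, ?_, ?_⟩
    · rw [Metric.uniformContinuous_iff]
      intro ε hε
      refine ⟨ε / L, by positivity, fun z w hzw => ?_⟩
      rw [Real.dist_eq]
      calc |max (-B) (min B (F z)) - max (-B) (min B (F w))| ≤ |F z - F w| := clamp_lip _ _ _
        _ ≤ L * dist z w := hFlip z w
        _ < L * (ε / L) := by exact mul_lt_mul_of_pos_left hzw hLpos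
        _ = ε := by field_simp
    · intro z
      dsimp only
      rw [abs_le]
      constructor
      · exact le_max_left _ _
      · exact max_le (by linarith) (min_le_left _ _)
    · intro a
      dsimp only
      have h1 := hFleg a
      have h2 := hFgeg a
      have h3 := (abs_le.mp (hgB a)).1
      have h4 := (abs_le.mp (hgB a)).2
      have hmin : min B (F a) = F a := min_eq_right (by linarith)
      rw [hmin]
      rcases le_total (-B) (F a) with h5 | h5
      · rw [max_eq_right h5, abs_le]; constructor <;> linarith
      · rw [max_eq_left h5, abs_le]; constructor <;> linarith
  choose G hG using step
  -- recursive remainders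
  set r : ℕ → A → ℝ := fun n => Nat.rec f (fun n g a => g a - G g (C / 2 ^ n) a) n with hr
  set Gs : ℕ → α → ℝ := fun n => G (r n) (C / 2 ^ n) with hGs
  have hr0 : ∀ a, r 0 a = f a := fun a => rfl
  have hrS : ∀ n a, r (n + 1) a = r n a - Gs n a := fun n a => rfl
  clear_value Gs r
  have hinv : ∀ n, UniformContinuous (r n) ∧ ∀ a, |r n a| ≤ C / 2 ^ n := by
    intro n
    induction n with
    | zero =>
      constructor
      · have he : r 0 = f := funext hr0
        rw [he]; exact hf
      · intro a; rw [hr0 a]; simpa using hC a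
    | succ n ih =>
      obtain ⟨ihU, ihB⟩ := ih
      have hpos : (0:ℝ) < C / 2 ^ n := by positivity
      obtain ⟨hGU, hGB, hGap⟩ := hG (r n) (C / 2 ^ n) ihU hpos ihB
      have hGsU : UniformContinuous (Gs n) := by rw [hGs]; exact hGU
      have hGsap : ∀ a : A, |r n a - Gs n a| ≤ C / 2 ^ n / 2 := by
        intro a; rw [hGs]; exact hGap a
      constructor
      · have : UniformContinuous fun a : A => r n a - Gs n a :=
          ihU.sub (hGsU.comp uniformContinuous_subtype_val)
        convert this using 1
        funext a
        exact hrS n a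
      · intro a
        rw [hrS n a]
        calc |r n a - Gs n ↑a| ≤ C / 2 ^ n / 2 := hGsap a
          _ = C / 2 ^ (n + 1) := by ring
  have hGprop : ∀ n, UniformContinuous (Gs n) ∧ (∀ z, |Gs n z| ≤ C / 2 ^ n) := by
    intro n
    have hpos : (0:ℝ) < C / 2 ^ n := by positivity
    obtain ⟨h1, h2, _⟩ := hG (r n) (C / 2 ^ n) (hinv n).1 hpos (hinv n).2
    rw [hGs]
    exact ⟨h1, h2⟩
  have hu : Summable (fun n : ℕ => C / 2 ^ n) := by
    have := (summable_geometric_two).mul_left C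
    refine this.congr (fun n => ?_)
    rw [one_div, inv_pow, div_eq_mul_inv]
  have hbound : ∀ (n : ℕ) (z : α), ‖Gs n z‖ ≤ C / 2 ^ n := fun n z => (hGprop n).2 z
  have hsummable : ∀ z : α, Summable fun n => Gs n z :=
    fun z => Summable.of_norm_bounded hu (fun n => hbound n z)
  refine ⟨fun z => ∑' n, Gs n z, ?_, ?_, ?_⟩
  · -- uniform continuity via uniform limit
    have htu : TendstoUniformly (fun N z => ∑ n ∈ Finset.range N, Gs n z)
        (fun z => ∑' n, Gs n z) Filter.atTop := tendstoUniformly_tsum_nat hu hbound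
    -- uniform limit of UC is UC, do it by hand
    rw [Metric.uniformContinuous_iff]
    intro ε hε
    rw [Metric.tendstoUniformly_iff] at htu
    obtain ⟨N, hN⟩ := (htu (ε / 3) (by linarith)).exists
    have hSN : UniformContinuous fun z => ∑ n ∈ Finset.range N, Gs n z := by
      clear hN
      induction N with
      | zero => simpa using uniformContinuous_const
      | succ N ih =>
        simp only [Finset.sum_range_succ]
        exact ih.add (hGprop N).1
    obtain ⟨δ, hδ, hδ'⟩ := Metric.uniformContinuous_iff.mp hSN (ε / 3) (by linarith)
    refine ⟨δ, hδ, fun z w hzw => ?_⟩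
    have h1 := hN z
    have h2 := hN w
    have h3 := hδ' hzw
    rw [Real.dist_eq] at h1 h2 h3 ⊢
    have : (∑' n, Gs n z) - (∑' n, Gs n w) =
        ((∑' n, Gs n z) - ∑ n ∈ Finset.range N, Gs n z)
        + ((∑ n ∈ Finset.range N, Gs n z) - ∑ n ∈ Finset.range N, Gs n w)
        + ((∑ n ∈ Finset.range N, Gs n w) - (∑' n, Gs n w)) := by ring
    rw [this]
    calc _ ≤ |(∑' n, Gs n z) - ∑ n ∈ Finset.range N, Gs n z|
          + |(∑ n ∈ Finset.range N, Gs n z) - ∑ n ∈ Finset.range N, Gs n w|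
          + |(∑ n ∈ Finset.range N, Gs n w) - (∑' n, Gs n w)| := by
            exact (abs_add_le _ _).trans (by gcongr; exact abs_add_le _ _)
      _ < ε := by
          have hc1 := abs_sub_comm (∑' n, Gs n z) (∑ n ∈ Finset.range N, Gs n z)
          have hc2 := abs_sub_comm (∑' n, Gs n w) (∑ n ∈ Finset.range N, Gs n w)
          linarith
  · intro z
    have hs : Summable fun n => ‖Gs n z‖ := by
      apply Summable.of_norm_bounded hu
      intro n
      rw [norm_norm]
      exact hbound n z
    rw [← Real.norm_eq_abs]
    calc ‖∑' n, Gs n z‖ ≤ ∑' n, ‖Gs n z‖ := norm_tsum_le_tsum_norm hs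
      _ ≤ ∑' n : ℕ, C / 2 ^ n := Summable.tsum_le_tsum (fun n => hbound n z) hs hu
      _ = 2 * C := by
          have : (fun n : ℕ => C / 2 ^ n) = fun n : ℕ => C * (1 / 2) ^ n := by
            funext n; rw [div_eq_mul_inv, one_div, inv_pow]
          rw [this, tsum_mul_left, tsum_geometric_two]; ring
  · intro a
    have hpartial : ∀ n, ∑ i ∈ Finset.range n, Gs i a = f a - r n a := by
      intro n
      induction n with
      | zero => simp [hr0]
      | succ n ih =>
        rw [Finset.sum_range_succ, ih, hrS n a]
        ring
    have hr0 : Filter.Tendsto (fun n => r n a) Filter.atTop (nhds 0) := by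
      apply squeeze_zero_norm (fun n => (hinv n).2 a)
      have : Filter.Tendsto (fun n : ℕ => C * (1/2) ^ n) Filter.atTop (nhds 0) := by
        rw [← mul_zero C]
        exact (tendsto_pow_atTop_nhds_zero_of_lt_one (by norm_num) (by norm_num)).const_mul C
      convert this using 2 with n
      rw [div_eq_mul_inv, one_div, inv_pow]
    have h1 : Filter.Tendsto (fun n => ∑ i ∈ Finset.range n, Gs i a) Filter.atTop
        (nhds (f a)) := by
      simp only [hpartial]
      have := Filter.Tendsto.const_sub (f a) hr0
      simpa using this
    have h2 := (hsummable a).hasSum.tendsto_sum_nat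
    exact tendsto_nhds_unique h2 h1



/-- Let `M` be a metric space, `X ⊆ M` a closed subset, where `X × X` and
`M × M` carry the sum metric `d((x,y),(x',y')) = d(x,x') + d(y,y')` (expressed below via
explicit ε-δ conditions). Let `E ⊆ X × X` be a controlled set and `f : X × X → ℝ` a bounded,
uniformly continuous function vanishing outside `E`. Then there is a bounded, uniformly
continuous `h : M × M → ℝ` restricting to `f` on `X × X`, vanishing at every point at
distance `≥ 1` from `E`; in particular `h` vanishes outside a controlled subset of `M × M`. -/
theorem stmt_9 {M : Type*} [MetricSpace M] (X : Set M) (hX : IsClosed X)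
    (E : Set (M × M)) (hEX : E ⊆ X ×ˢ X)
    (hEctrl : ∃ S : ℝ, ∀ p ∈ E, dist p.1 p.2 ≤ S)
    (f : (X ×ˢ X : Set (M × M)) → ℝ)
    (hfB : ∃ C : ℝ, ∀ p, |f p| ≤ C)
    (hfU : ∀ ε > (0 : ℝ), ∃ δ > (0 : ℝ), ∀ p q : (X ×ˢ X : Set (M × M)),
      dist (p : M × M).1 (q : M × M).1 + dist (p : M × M).2 (q : M × M).2 < δ →
      |f p - f q| < ε)
    (hf0 : ∀ p : (X ×ˢ X : Set (M × M)), (p : M × M) ∉ E → f p = 0) :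
    ∃ h : M × M → ℝ,
      (∃ C : ℝ, ∀ z : M × M, |h z| ≤ C) ∧
      (∀ ε > (0 : ℝ), ∃ δ > (0 : ℝ), ∀ z z' : M × M,
        dist z.1 z'.1 + dist z.2 z'.2 < δ → |h z - h z'| < ε) ∧
      (∀ p : (X ×ˢ X : Set (M × M)), h p = f p) ∧
      (∀ z : M × M, (∀ e ∈ E, 1 ≤ dist z.1 e.1 + dist z.2 e.2) → h z = 0) ∧
      ∃ E' : Set (M × M), (∃ S : ℝ, ∀ p ∈ E', dist p.1 p.2 ≤ S) ∧
        ∀ z ∉ E', h z = 0 := by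
  rcases Set.eq_empty_or_nonempty E with hE | hE
  · subst hE
    refine ⟨0, ⟨0, by simp⟩, fun ε hε => ⟨1, one_pos, by simp [hε]⟩, ?_, by simp,
      ∅, ⟨0, by simp⟩, by simp⟩
    intro p
    simp only [Pi.zero_apply]
    exact (hf0 p (by simp)).symm
  · obtain ⟨e₀, he₀⟩ := hE
    have hAne : (X ×ˢ X : Set (M × M)).Nonempty := ⟨e₀, hEX he₀⟩
    obtain ⟨C, hC⟩ := hfB
    have hC0 : 0 ≤ C := le_trans (abs_nonneg _) (hC ⟨e₀, hEX he₀⟩)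
    have hfUC : UniformContinuous f := by
      rw [Metric.uniformContinuous_iff]
      intro ε hε
      obtain ⟨δ, hδ, hδ'⟩ := hfU ε hε
      refine ⟨δ / 2, by linarith, fun p q hpq => ?_⟩
      rw [Subtype.dist_eq, Prod.dist_eq] at hpq
      have h1 : dist (p : M × M).1 (q : M × M).1 + dist (p : M × M).2 (q : M × M).2 < δ := by
        have := le_max_left (dist (p : M × M).1 (q : M × M).1) (dist (p : M × M).2 (q : M × M).2)
        have := le_max_right (dist (p : M × M).1 (q : M × M).1) (dist (p : M × M).2 (q : M × M).2)
        linarith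
      rw [Real.dist_eq]
      exact hδ' p q h1
    obtain ⟨F, hFUC, hFbd, hFA⟩ := uc_extend hAne f C hC hfUC
    set φ : M × M → ℝ := fun z => max 0 (1 - 2 * Metric.infDist z E) with hφ
    have hφ0 : ∀ z, 0 ≤ φ z := fun z => le_max_left _ _
    have hφ1 : ∀ z, φ z ≤ 1 := by
      intro z
      apply max_le (by norm_num)
      have := Metric.infDist_nonneg (s := E) (x := z)
      linarith
    have hφlip : ∀ z w, |φ z - φ w| ≤ 2 * dist z w := by
      intro z w
      have h1 : |φ z - φ w| ≤ |(1 - 2 * Metric.infDist z E) - (1 - 2 * Metric.infDist w E)| :=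
        max_lip 0 _ _
      have h2 : Metric.infDist z E ≤ Metric.infDist w E + dist z w :=
        Metric.infDist_le_infDist_add_dist
      have h3 : Metric.infDist w E ≤ Metric.infDist z E + dist w z :=
        Metric.infDist_le_infDist_add_dist
      rw [dist_comm w z] at h3
      rw [abs_le] at h1 ⊢
      obtain ⟨h1a, h1b⟩ := h1
      rcases abs_cases ((1 - 2 * Metric.infDist z E) - (1 - 2 * Metric.infDist w E)) with
        ⟨he, _⟩ | ⟨he, _⟩ <;> rw [he] at h1a h1b <;> constructor <;> linarith
    refine ⟨fun z => φ z * F z, ⟨2 * C, ?_⟩, ?_, ?_, ?_,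
      {z | Metric.infDist z E < 1}, ?_, ?_⟩
    · intro z
      rw [abs_mul]
      calc |φ z| * |F z| ≤ 1 * (2 * C) := by
            apply mul_le_mul _ (hFbd z) (abs_nonneg _) zero_le_one
            rw [abs_of_nonneg (hφ0 z)]; exact hφ1 z
        _ = 2 * C := one_mul _
    · -- uniform continuity in sum form
      intro ε hε
      obtain ⟨δ₁, hδ₁, hδ₁'⟩ := Metric.uniformContinuous_iff.mp hFUC (ε / 2) (by linarith)
      set δ₂ : ℝ := ε / (8 * C + 8) with hδ₂def
      have hδ₂ : 0 < δ₂ := by positivity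
      refine ⟨min δ₁ δ₂, lt_min hδ₁ hδ₂, fun z z' hzz => ?_⟩
      have hd : dist z z' < min δ₁ δ₂ := by
        rw [Prod.dist_eq]
        have h1 := dist_nonneg (x := z.1) (y := z'.1)
        have h2 := dist_nonneg (x := z.2) (y := z'.2)
        rcases max_cases (dist z.1 z'.1) (dist z.2 z'.2) with ⟨he, _⟩ | ⟨he, _⟩ <;>
          rw [he] <;> linarith
      have hdF : |F z - F z'| < ε / 2 := by
        have := hδ₁' (lt_of_lt_of_le hd (min_le_left _ _))
        rwa [Real.dist_eq] at this
      have hdφ : |φ z - φ z'| ≤ 2 * δ₂ := by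
        have h1 := hφlip z z'
        have h2 : dist z z' ≤ δ₂ := le_of_lt (lt_of_lt_of_le hd (min_le_right _ _))
        nlinarith [dist_nonneg (x := z) (y := z')]
      have key : |φ z * F z - φ z' * F z'| ≤ |φ z| * |F z - F z'| + |F z'| * |φ z - φ z'| := by
        have : φ z * F z - φ z' * F z' = φ z * (F z - F z') + F z' * (φ z - φ z') := by ring
        rw [this]
        calc |φ z * (F z - F z') + F z' * (φ z - φ z')|
            ≤ |φ z * (F z - F z')| + |F z' * (φ z - φ z')| := abs_add_le _ _
          _ = |φ z| * |F z - F z'| + |F z'| * |φ z - φ z'| := by rw [abs_mul, abs_mul]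
      have hφzabs : |φ z| ≤ 1 := by rw [abs_of_nonneg (hφ0 z)]; exact hφ1 z
      have hδ₂le : 2 * C * (2 * δ₂) ≤ ε / 2 := by
        rw [hδ₂def]
        have h8 : (0:ℝ) < 8 * C + 8 := by positivity
        have he : 2 * C * (2 * (ε / (8 * C + 8))) = (4 * C * ε) / (8 * C + 8) := by ring
        rw [he, div_le_iff₀ h8]
        nlinarith
      calc |φ z * F z - φ z' * F z'| ≤ |φ z| * |F z - F z'| + |F z'| * |φ z - φ z'| := key
        _ ≤ 1 * |F z - F z'| + (2 * C) * (2 * δ₂) := by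
            apply add_le_add
            · exact mul_le_mul_of_nonneg_right hφzabs (abs_nonneg _)
            · exact mul_le_mul (hFbd z') hdφ (abs_nonneg _) (by linarith)
        _ < ε := by rw [one_mul]; linarith
    · -- restriction to X ×ˢ X
      intro p
      show φ (p : M × M) * F (p : M × M) = f p
      by_cases hp : (p : M × M) ∈ E
      · have : Metric.infDist (p : M × M) E = 0 := Metric.infDist_zero_of_mem hp
        have hφp : φ (p : M × M) = 1 := by rw [hφ]; simp [this]
        rw [hφp, one_mul]
        exact hFA p
      · have hfp : f p = 0 := hf0 p hp
        have : F (p : M × M) = 0 := by rw [hFA p, hfp]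
        rw [this, mul_zero, hfp]
    · -- vanishes at distance ≥ 1 from E
      intro z hz
      show φ z * F z = 0
      have h12 : (1:ℝ)/2 ≤ Metric.infDist z E := by
        by_contra hcon
        push_neg at hcon
        obtain ⟨e, heE, hde⟩ := (Metric.infDist_lt_iff ⟨e₀, he₀⟩).mp hcon
        have h1 := hz e heE
        rw [Prod.dist_eq] at hde
        have h2 := le_max_left (dist z.1 e.1) (dist z.2 e.2)
        have h3 := le_max_right (dist z.1 e.1) (dist z.2 e.2)
        linarith
      have : φ z = 0 := by
        rw [hφ]
        apply max_eq_left
        linarith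
      rw [this, zero_mul]
    · -- E' is controlled
      obtain ⟨S, hS⟩ := hEctrl
      refine ⟨S + 2, fun p hp => ?_⟩
      obtain ⟨e, heE, hde⟩ := (Metric.infDist_lt_iff ⟨e₀, he₀⟩).mp hp
      rw [Prod.dist_eq] at hde
      have h2 := le_max_left (dist p.1 e.1) (dist p.2 e.2)
      have h3 := le_max_right (dist p.1 e.1) (dist p.2 e.2)
      have hS' := hS e heE
      calc dist p.1 p.2 ≤ dist p.1 e.1 + dist e.1 e.2 + dist e.2 p.2 :=
            dist_triangle4 _ _ _ _
        _ ≤ 1 + S + 1 := by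
            have := dist_comm e.2 p.2
            rw [dist_comm e.2 p.2]
            apply add_le_add (add_le_add (by linarith) hS') (by linarith)
        _ ≤ S + 2 := by linarith
    · -- h vanishes outside E'
      intro z hz
      show φ z * F z = 0
      simp only [Set.mem_setOf_eq, not_lt] at hz
      have : φ z = 0 := by
        rw [hφ]
        apply max_eq_left
        have := Metric.infDist_nonneg (s := E) (x := z)
        linarith
      rw [this, zero_mul]
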